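/- There is an absolute constant K > 0 such that for every q ∈ ℕ, every probability measure η on [0,1)², and all unit vectors v, v′ ∈ S¹ with |v − v′| ≤ 2^{-q}, one has |H_q(Π_v η) − H_q(Π_{v′} η)| ≤ K/q, where Π_v(x) = v·x. -/

import Mathlib

open MeasureTheory Metric Set Filter
open scoped ENNReal NNReal Topology

noncomputable section

/-- The plane `ℝ²` with the Euclidean norm. -/
abbrev Plane := EuclideanSpace ℝ (Fin 2)

/-- The closed unit square `[0,1]²`. -/
def unitSquare : Set Plane := {x | ∀ i, 0 ≤ x i ∧ x i ≤ 1}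

/-- The half-open unit cube `[0,1)^d`. -/
def unitCubeHO (d : ℕ) : Set (EuclideanSpace ℝ (Fin d)) := {x | ∀ i, 0 ≤ x i ∧ x i < 1}

/-- The pinned distance set `dist(x,A) = {|x-y| : y ∈ A}`. -/
def pinnedDist (x : Plane) (A : Set Plane) : Set ℝ := (fun y => dist x y) '' A

/-- The distance set `dist(A,B) = {|x-y| : x ∈ A, y ∈ B}`. -/
def distSet (A B : Set Plane) : Set ℝ := {r | ∃ x ∈ A, ∃ y ∈ B, r = dist x y}

/-- Number of cells of the grid `εℤ` that intersect `F ⊆ ℝ`. -/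
def gridCount (F : Set ℝ) (ε : ℝ) : ℕ :=
  Nat.card {n : ℤ // (Set.Ico ((n : ℝ) * ε) (((n : ℝ) + 1) * ε) ∩ F).Nonempty}

/-- Number of cells of the grid `εℤ²` that intersect `F ⊆ ℝ²`. -/
def gridCount2 (F : Set Plane) (ε : ℝ) : ℕ :=
  Nat.card {n : Fin 2 → ℤ //
    ({x : Plane | ∀ i, (n i : ℝ) * ε ≤ x i ∧ x i < ((n i : ℝ) + 1) * ε} ∩ F).Nonempty}

/-- Lower box-counting dimension of `F ⊆ ℝ`. -/
def lbdim (F : Set ℝ) : ℝ :=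
  Filter.liminf (fun ε : ℝ => Real.log (gridCount F ε) / (-Real.log ε)) (nhdsWithin 0 (Set.Ioi 0))

/-- Upper box-counting dimension of `F ⊆ ℝ`. -/
def ubdim (F : Set ℝ) : ℝ :=
  Filter.limsup (fun ε : ℝ => Real.log (gridCount F ε) / (-Real.log ε)) (nhdsWithin 0 (Set.Ioi 0))

/-- Lower box-counting dimension of `F ⊆ ℝ²`. -/
def lbdim2 (F : Set Plane) : ℝ :=
  Filter.liminf (fun ε : ℝ => Real.log (gridCount2 F ε) / (-Real.log ε)) (nhdsWithin 0 (Set.Ioi 0))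

/-- Upper box-counting dimension of `F ⊆ ℝ²`. -/
def ubdim2 (F : Set Plane) : ℝ :=
  Filter.limsup (fun ε : ℝ => Real.log (gridCount2 F ε) / (-Real.log ε)) (nhdsWithin 0 (Set.Ioi 0))

/-- Modified lower box-counting dimension of `F ⊆ ℝ`. -/
def mlbdim (F : Set ℝ) : ℝ :=
  sInf {a : ℝ | ∃ G : ℕ → Set ℝ, (∀ i, Bornology.IsBounded (G i)) ∧ (F ⊆ ⋃ i, G i) ∧
    ∀ i, lbdim (G i) ≤ a}

/-- A set `E ⊆ ℝ^d` is discrete `(s,C)`-Ahlfors regular at scale `2^{-N}`. -/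
def DiscreteAhlfors (d : ℕ) (E : Set (EuclideanSpace ℝ (Fin d))) (s C : ℝ) (N : ℕ) : Prop :=
  E.Finite ∧ ∀ x ∈ E, ∀ k : ℕ, k < N →
    C⁻¹ * (2 : ℝ) ^ (((N : ℝ) - (k : ℝ)) * s)
        ≤ (Nat.card ↥(E ∩ closedBall x ((2 : ℝ) ^ (-(k : ℤ)))) : ℝ) ∧
    (Nat.card ↥(E ∩ closedBall x ((2 : ℝ) ^ (-(k : ℤ)))) : ℝ)
        ≤ C * (2 : ℝ) ^ (((N : ℝ) - (k : ℝ)) * s)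

/-- Topological support of a measure. -/
def msupport {X : Type*} [TopologicalSpace X] [MeasurableSpace X]
    (μ : MeasureTheory.Measure X) : Set X :=
  {x | ∀ U : Set X, IsOpen U → x ∈ U → 0 < μ U}

/-- A measure is `(s,C)`-Ahlfors regular at scale `2^{-N}`. -/
def ARMeasureAtScale (d : ℕ) (ν : Measure (EuclideanSpace ℝ (Fin d))) (s C : ℝ) (N : ℕ) : Prop :=
  ∀ x ∈ msupport ν, ∀ r : ℝ, (2 : ℝ) ^ (-(N : ℤ)) ≤ r → r ≤ 1 →
    ENNReal.ofReal (C⁻¹ * r ^ s) ≤ ν (closedBall x r) ∧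
      ν (closedBall x r) ≤ ENNReal.ofReal (C * r ^ s)

/-- A measure is `(s,C)`-Ahlfors regular. -/
def ARMeasure (d : ℕ) (ν : Measure (EuclideanSpace ℝ (Fin d))) (s C : ℝ) : Prop :=
  ∀ x ∈ msupport ν, ∀ r : ℝ, 0 < r → r ≤ 1 →
    ENNReal.ofReal (C⁻¹ * r ^ s) ≤ ν (closedBall x r) ∧
      ν (closedBall x r) ≤ ENNReal.ofReal (C * r ^ s)

/-- A set `E` is `(s,C)`-Ahlfors regular: `ℋ^s|_E` is a positive finite `(s,C)`-Ahlfors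
regular measure. -/
def ARSet (d : ℕ) (E : Set (EuclideanSpace ℝ (Fin d))) (s C : ℝ) : Prop :=
  0 < μH[s] E ∧ μH[s] E < ⊤ ∧ ARMeasure d (μH[s].restrict E) s C

/-- The half-open dyadic cube of generation `k` indexed by `m ∈ ℤ^d`. -/
def dcube (d k : ℕ) (m : Fin d → ℤ) : Set (EuclideanSpace ℝ (Fin d)) :=
  {x | ∀ i, (m i : ℝ) * (2 : ℝ) ^ (-(k : ℤ)) ≤ x i ∧ x i < ((m i : ℝ) + 1) * (2 : ℝ) ^ (-(k : ℤ))}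

/-- The homothety mapping the dyadic cube `dcube d k m` onto `[0,1)^d`. -/
def cubeMap (d k : ℕ) (m : Fin d → ℤ) (x : EuclideanSpace ℝ (Fin d)) :
    EuclideanSpace ℝ (Fin d) :=
  (EuclideanSpace.equiv (Fin d) ℝ).symm (fun i => (2 : ℝ) ^ k * x i - (m i : ℝ))

/-- The (left) corner of the dyadic cube `dcube d N m`. -/
def cubeCorner (d N : ℕ) (m : Fin d → ℤ) : EuclideanSpace ℝ (Fin d) :=
  (EuclideanSpace.equiv (Fin d) ℝ).symm (fun i => (m i : ℝ) * (2 : ℝ) ^ (-(N : ℤ)))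

/-- `μ^Q`: the normalized restriction of `μ` to a dyadic cube, renormalized to `[0,1)^d`. -/
def cubeMeasure (d k : ℕ) (m : Fin d → ℤ) (μ : Measure (EuclideanSpace ℝ (Fin d))) :
    Measure (EuclideanSpace ℝ (Fin d)) :=
  Measure.map (cubeMap d k m) ((μ (dcube d k m))⁻¹ • μ.restrict (dcube d k m))

/-- Entropy (base 2) of `μ` with respect to the dyadic partition of generation `k`. -/
def entropy (d : ℕ) (μ : Measure (EuclideanSpace ℝ (Fin d))) (k : ℕ) : ℝ :=
  ∑' m : Fin d → ℤ, -((μ (dcube d k m)).toReal * Real.logb 2 (μ (dcube d k m)).toReal)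

/-- Normalized entropy `H_k(μ) = H(μ, 𝒟_k)/k`. -/
def nentropy (d : ℕ) (μ : Measure (EuclideanSpace ℝ (Fin d))) (k : ℕ) : ℝ :=
  entropy d μ k / k

/-- The half-open dyadic interval of generation `k` indexed by `m ∈ ℤ`. -/
def dint (k : ℕ) (m : ℤ) : Set ℝ :=
  Set.Ico ((m : ℝ) * (2 : ℝ) ^ (-(k : ℤ))) (((m : ℝ) + 1) * (2 : ℝ) ^ (-(k : ℤ)))

/-- Entropy (base 2) of a measure on `ℝ` with respect to dyadic intervals of generation `k`. -/
def entropyR (μ : Measure ℝ) (k : ℕ) : ℝ :=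
  ∑' m : ℤ, -((μ (dint k m)).toReal * Real.logb 2 (μ (dint k m)).toReal)

/-- Normalized entropy of a measure on `ℝ`. -/
def nentropyR (μ : Measure ℝ) (k : ℕ) : ℝ :=
  entropyR μ k / k

open Classical in
/-- `μ` is `s`-rich at resolution `(N,q,δ)`. -/
def sRich (d : ℕ) (μ : Measure (EuclideanSpace ℝ (Fin d))) (s : ℝ) (N q : ℕ) (δ : ℝ) : Prop :=
  (1 / N : ℝ) * ∑ n ∈ Finset.range N, ∑' m : Fin d → ℤ,
    (if 0 < μ (dcube d n m) ∧ nentropy d (cubeMeasure d n m μ) q < s - δ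
      then (μ (dcube d n m)).toReal else 0) < δ

/-- `μ` is weakly `s`-regular. -/
def WeaklyRegular (d : ℕ) (μ : Measure (EuclideanSpace ℝ (Fin d))) (s : ℝ) : Prop :=
  ∀ δ : ℝ, 0 < δ → ∃ q : ℕ, ∃ N₀ : ℕ, ∀ N : ℕ, N₀ ≤ N → sRich d μ s N q δ

/-- Average of the quantity `f(μ^Q)` with respect to the scenery distribution `⟨μ⟩_{[0,N)}`. -/
def sceneryAvg (d : ℕ) (μ : Measure (EuclideanSpace ℝ (Fin d))) (N : ℕ)
    (f : Measure (EuclideanSpace ℝ (Fin d)) → ℝ) : ℝ :=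
  (1 / N : ℝ) * ∑ n ∈ Finset.range N, ∑' m : Fin d → ℤ,
    (μ (dcube d n m)).toReal * f (cubeMeasure d n m μ)

/-- The two-sided open cone with apex `a`, direction `v` and half-opening angle `β`. -/
def cone (a : Plane) (β : ℝ) (v : Plane) : Set Plane :=
  {x | x ≠ a ∧ (InnerProductGeometry.angle (x - a) v < β ∨
      InnerProductGeometry.angle (x - a) (-v) < β)}

/-- `A` is `k`-discrete: every dyadic square of generation `k` contains at most one point. -/
def kDiscrete (A : Set Plane) (k : ℕ) : Prop :=
  ∀ m : Fin 2 → ℤ, (A ∩ dcube 2 k m).Subsingleton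

/-- Hausdorff dimension of a measure: `inf {dimH E : μ E > 0}`. -/
def hdimMeasure (d : ℕ) (μ : Measure (EuclideanSpace ℝ (Fin d))) : ℝ≥0∞ :=
  ⨅ (E : Set (EuclideanSpace ℝ (Fin d))) (_ : 0 < μ E), dimH E

/-- Orthogonal projection onto direction `v`: `Π_v(x) = v ⬝ x`. -/
def projDir (v x : Plane) : ℝ := inner ℝ v x

/-- The measure associated to a discrete set: `(1/#A) ∑_D #(A ∩ D) ℒ_D`. -/
def discreteToMeasure (d N : ℕ) (A : Set (EuclideanSpace ℝ (Fin d))) :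
    Measure (EuclideanSpace ℝ (Fin d)) :=
  (Nat.card ↥A : ℝ≥0∞)⁻¹ • Measure.sum (fun m : Fin d → ℤ =>
    (Nat.card ↥(A ∩ dcube d N m) : ℝ≥0∞) •
      ((volume (dcube d N m))⁻¹ • volume.restrict (dcube d N m)))


/-- The Katz--Tao example set
`A_N = {(i 2^{-N/2}, j 2^{-N}) : 0 ≤ i < 2^{N/2} - 1, 0 ≤ j < 2^{N/2}}`. -/
def exampleSet (N : ℕ) : Set Plane :=
  {p | ∃ i j : ℤ, 0 ≤ i ∧ i < 2 ^ (N / 2) - 1 ∧ 0 ≤ j ∧ j < 2 ^ (N / 2) ∧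
    p 0 = (i : ℝ) * (2 : ℝ) ^ (-((N / 2 : ℕ) : ℤ)) ∧ p 1 = (j : ℝ) * (2 : ℝ) ^ (-(N : ℤ))}

end

theorem aux_negMulLog_sum_le {ι : Type*} (s : Finset ι) (f : ι → ℝ)
    (hf : ∀ i ∈ s, 0 ≤ f i) :
    Real.negMulLog (∑ i ∈ s, f i) ≤ ∑ i ∈ s, Real.negMulLog (f i) := by
  have key : ∀ i ∈ s, -(f i * Real.log (∑ j ∈ s, f j)) ≤ Real.negMulLog (f i) := by
    intro i hi
    rcases eq_or_lt_of_le (hf i hi) with h0 | h0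
    · simp [← h0]
    · rw [Real.negMulLog, neg_mul]
      have hle : f i ≤ ∑ j ∈ s, f j := Finset.single_le_sum hf hi
      have := Real.log_le_log h0 hle
      nlinarith
  calc Real.negMulLog (∑ i ∈ s, f i)
      = ∑ i ∈ s, -(f i * Real.log (∑ j ∈ s, f j)) := by
        rw [Real.negMulLog, neg_mul, Finset.sum_mul, ← Finset.sum_neg_distrib]
    _ ≤ ∑ i ∈ s, Real.negMulLog (f i) := Finset.sum_le_sum key

theorem aux_sum_negMulLog_le {ι : Type*} [DecidableEq ι] (s : Finset ι) (f : ι → ℝ)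
    (hf : ∀ i ∈ s, 0 ≤ f i) (k : ℝ) (hk0 : 0 < k)
    (hcard : (((s.filter fun i => f i ≠ 0)).card : ℝ) ≤ k) :
    ∑ i ∈ s, Real.negMulLog (f i) ≤
      Real.negMulLog (∑ i ∈ s, f i) + (∑ i ∈ s, f i) * Real.log k := by
  classical
  set a := ∑ i ∈ s, f i with ha
  have ha0 : 0 ≤ a := Finset.sum_nonneg hf
  rcases eq_or_lt_of_le ha0 with h0 | h0
  · have hall : ∀ i ∈ s, f i = 0 :=
      (Finset.sum_eq_zero_iff_of_nonneg hf).1 h0.symm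
    have : ∑ i ∈ s, Real.negMulLog (f i) = 0 :=
      Finset.sum_eq_zero fun i hi => by simp [hall i hi]
    simp [this, ← h0]
  · set F := s.filter fun i => f i ≠ 0 with hF
    have hFs : F ⊆ s := Finset.filter_subset _ _
    have hsumF : ∑ i ∈ F, f i = a := Finset.sum_filter_ne_zero s
    have hnegF : ∑ i ∈ s, Real.negMulLog (f i) = ∑ i ∈ F, Real.negMulLog (f i) :=
      (Finset.sum_filter_of_ne (fun i _ h => by
        intro hfi; exact h (by simp [hfi]))).symm
    have hpos : ∀ i ∈ F, 0 < f i := by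
      intro i hi
      rw [hF, Finset.mem_filter] at hi
      exact lt_of_le_of_ne (hf i hi.1) (Ne.symm hi.2)
    have per : ∀ i ∈ F, Real.negMulLog (f i)
        ≤ a / k - f i - f i * Real.log a + f i * Real.log k := by
      intro i hi
      have hc := hpos i hi
      have hpos2 : 0 < a / (k * f i) := by positivity
      have key := Real.log_le_sub_one_of_pos hpos2
      have hlog : Real.log (a / (k * f i))
          = Real.log a - Real.log k - Real.log (f i) := by
        rw [Real.log_div (ne_of_gt h0) (by positivity),
          Real.log_mul (ne_of_gt hk0) (ne_of_gt hc)]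
        ring
      have h1 : f i * Real.log (a / (k * f i)) ≤ a / k - f i := by
        have := mul_le_mul_of_nonneg_left key (le_of_lt hc)
        have he : f i * (a / (k * f i) - 1) = a / k - f i := by
          field_simp
        linarith [he ▸ this]
      have h2 : f i * Real.log (a / (k * f i))
          = f i * Real.log a - f i * Real.log k - f i * Real.log (f i) := by
        rw [hlog]; ring
      rw [Real.negMulLog, neg_mul]
      linarith
    have hsum := Finset.sum_le_sum per
    rw [← hnegF] at hsum
    have hexp : ∑ i ∈ F, (a / k - f i - f i * Real.log a + f i * Real.log k)
        = (F.card : ℝ) * (a / k) - a - a * Real.log a + a * Real.log k := by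
      rw [Finset.sum_add_distrib, Finset.sum_sub_distrib, Finset.sum_sub_distrib,
        Finset.sum_const, ← Finset.sum_mul, ← Finset.sum_mul, hsumF]
      push_cast
      ring
    have hcard' : (F.card : ℝ) * (a / k) ≤ a := by
      have := mul_le_mul_of_nonneg_right hcard (le_of_lt (div_pos h0 hk0))
      have : k * (a / k) = a := by field_simp
      nlinarith [div_pos h0 hk0, mul_le_mul_of_nonneg_right hcard (le_of_lt (div_pos h0 hk0))]
    rw [Real.negMulLog, neg_mul]
    linarith [hexp ▸ hsum]

section Main

variable {q : ℕ} {η : MeasureTheory.Measure Plane} {v v' : Plane}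

theorem aux_projDir_measurable (w : Plane) : Measurable (projDir w) := by
  have : Continuous (projDir w) := by
    unfold projDir
    exact Continuous.inner continuous_const continuous_id
  exact this.measurable

theorem aux_mem_dint (x : ℝ) (m : ℤ) :
    x ∈ dint q m ↔ (m : ℝ) * (2:ℝ)^(-(q:ℤ)) ≤ x ∧ x < ((m:ℝ)+1) * (2:ℝ)^(-(q:ℤ)) := Iff.rfl

theorem aux_dint_disjoint {m n : ℤ} (h : m ≠ n) : Disjoint (dint q m) (dint q n) := by
  rw [Set.disjoint_left]
  rintro x ⟨h1, h2⟩ ⟨h3, h4⟩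
  have hδ : (0:ℝ) < (2:ℝ)^(-(q:ℤ)) := by positivity
  rcases lt_or_gt_of_ne h with hmn | hmn
  · have : ((m:ℝ)+1) ≤ (n:ℝ) := by exact_mod_cast hmn
    nlinarith
  · have : ((n:ℝ)+1) ≤ (m:ℝ) := by exact_mod_cast hmn
    nlinarith

theorem aux_dint_cover (x : ℝ) : ∃ m : ℤ, x ∈ dint q m := by
  have hδ : (0:ℝ) < (2:ℝ)^(-(q:ℤ)) := by positivity
  refine ⟨⌊x / (2:ℝ)^(-(q:ℤ))⌋, ?_, ?_⟩
  · have := Int.floor_le (x / (2:ℝ)^(-(q:ℤ)))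
    calc (⌊x / (2:ℝ)^(-(q:ℤ))⌋ : ℝ) * (2:ℝ)^(-(q:ℤ))
        ≤ (x / (2:ℝ)^(-(q:ℤ))) * (2:ℝ)^(-(q:ℤ)) := by nlinarith
      _ = x := by field_simp
  · have := Int.lt_floor_add_one (x / (2:ℝ)^(-(q:ℤ)))
    calc x = (x / (2:ℝ)^(-(q:ℤ))) * (2:ℝ)^(-(q:ℤ)) := by field_simp
      _ < ((⌊x / (2:ℝ)^(-(q:ℤ))⌋:ℝ) + 1) * (2:ℝ)^(-(q:ℤ)) := by nlinarith

/-- norm bound on the unit cube -/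
theorem aux_norm_le (x : Plane) (hx : x ∈ unitCubeHO 2) : ‖x‖ ≤ 2 := by
  have h := EuclideanSpace.norm_eq x
  have h0 := (hx 0).1; have h1 := (hx 0).2
  have h2 := (hx 1).1; have h3 := (hx 1).2
  rw [h]
  have : ∑ i : Fin 2, ‖x i‖^2 ≤ 4 := by
    rw [Fin.sum_univ_two]
    have e0 : ‖x 0‖ ≤ 1 := by rw [Real.norm_eq_abs, abs_le]; constructor <;> linarith
    have e1 : ‖x 1‖ ≤ 1 := by rw [Real.norm_eq_abs, abs_le]; constructor <;> linarith
    nlinarith [norm_nonneg (x 0), norm_nonneg (x 1)]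
  calc Real.sqrt (∑ i : Fin 2, ‖x i‖^2) ≤ Real.sqrt 4 := Real.sqrt_le_sqrt this
    _ = 2 := by
        rw [show (4:ℝ) = 2^2 by norm_num, Real.sqrt_sq (by norm_num : (0:ℝ) ≤ 2)]

end Main

theorem aux_cube_measurable : MeasurableSet (unitCubeHO 2) := by
  have : unitCubeHO 2 = ⋂ i : Fin 2, (EuclideanSpace.proj (𝕜 := ℝ) i) ⁻¹' (Set.Ico (0:ℝ) 1) := by
    ext x
    simp [unitCubeHO, Set.mem_iInter]
  rw [this]
  exact MeasurableSet.iInter fun i =>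
    ((EuclideanSpace.proj (𝕜 := ℝ) i).continuous.measurable) measurableSet_Ico

theorem aux_entropy_close (q : ℕ) (η : MeasureTheory.Measure Plane)
    (hprob : MeasureTheory.IsProbabilityMeasure η)
    (hcube : η (unitCubeHO 2) = 1)
    (v v' : Plane) (hv : ‖v‖ = 1) (hv' : ‖v'‖ = 1)
    (hd : ‖v - v'‖ ≤ (2 : ℝ) ^ (-(q : ℤ))) :
    entropyR (η.map (projDir v)) q ≤ entropyR (η.map (projDir v')) q + 3 := by
  classical
  set δ : ℝ := (2:ℝ)^(-(q:ℤ)) with hδdef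
  have hδ : 0 < δ := by positivity
  -- null complement of the cube
  have hnull : η (unitCubeHO 2)ᶜ = 0 := by
    rw [measure_compl aux_cube_measurable (measure_ne_top η _), hcube, measure_univ, tsub_self]
  have hXzero : ∀ X : Set Plane, X ∩ unitCubeHO 2 = ∅ → η X = 0 := by
    intro X hX
    have h1 : η X ≤ η (X ∩ unitCubeHO 2) + η (X \ unitCubeHO 2) :=
      measure_le_inter_add_diff η X _
    have h2 : η (X \ unitCubeHO 2) ≤ η (unitCubeHO 2)ᶜ :=
      measure_mono (Set.diff_subset_compl _ _)
    rw [hX, measure_empty] at h1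
    rw [hnull] at h2
    have h3 := le_zero_iff.mp h2
    rw [h3, add_zero] at h1
    exact le_zero_iff.mp h1
  -- the strips
  set A : Plane → ℤ → Set Plane := fun w m => projDir w ⁻¹' dint q m with hA
  have hAmeas : ∀ w m, MeasurableSet (A w m) := fun w m =>
    aux_projDir_measurable w measurableSet_Ico
  have hAdisj : ∀ w, Pairwise (Function.onFun Disjoint (A w)) := by
    intro w m n hmn
    exact (aux_dint_disjoint hmn).preimage _
  have hAcover : ∀ w, (⋃ n, A w n) = Set.univ := by
    intro w
    ext x
    simp only [Set.mem_iUnion, Set.mem_univ, iff_true]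
    exact aux_dint_cover (projDir w x)
  -- the inner product bound on the cube
  have hip : ∀ (w : Plane), ‖w‖ = 1 → ∀ x ∈ unitCubeHO 2, |projDir w x| ≤ 2 := by
    intro w hw x hx
    calc |projDir w x| ≤ ‖w‖ * ‖x‖ := abs_real_inner_le_norm w x
      _ = ‖x‖ := by rw [hw, one_mul]
      _ ≤ 2 := aux_norm_le x hx
  -- index window
  set S : Finset ℤ := Finset.Icc (-(2^(q+1)) - 1) (2^(q+1)) with hSdef
  have hpow : ((2:ℝ)^(q+1)) * δ = 2 := by
    rw [hδdef]
    rw [show ((-(q:ℤ))) = -(q:ℤ) from rfl]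
    rw [zpow_neg, zpow_natCast]
    rw [pow_succ]
    field_simp
  have hSzero : ∀ w : Plane, ‖w‖ = 1 → ∀ m : ℤ, m ∉ S → η (A w m) = 0 := by
    intro w hw m hm
    apply hXzero
    ext x
    simp only [Set.mem_inter_iff, Set.mem_empty_iff_false, iff_false, not_and]
    intro hxA hxC
    have hb := hip w hw x hxC
    rw [abs_le] at hb
    obtain ⟨h1, h2⟩ : (m:ℝ) * δ ≤ projDir w x ∧ projDir w x < ((m:ℝ)+1) * δ := hxA
    rw [hSdef, Finset.mem_Icc, not_and_or, not_le, not_le] at hm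
    rcases hm with hm | hm
    · -- m < -(2^(q+1)) - 1, so m + 1 ≤ -(2^(q+1)) - 1
      have : (m:ℝ) + 1 ≤ -((2:ℝ)^(q+1)) - 1 := by
        have : m + 1 ≤ -(2^(q+1)) - 1 := by omega
        exact_mod_cast this
      have h3 : ((m:ℝ)+1) * δ ≤ (-((2:ℝ)^(q+1)) - 1) * δ :=
        mul_le_mul_of_nonneg_right this (le_of_lt hδ)
      nlinarith
    · -- 2^(q+1) < m
      have : (2:ℝ)^(q+1) + 1 ≤ (m:ℝ) := by
        have : 2^(q+1) + 1 ≤ m := by omega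
        exact_mod_cast this
      have h3 : ((2:ℝ)^(q+1) + 1) * δ ≤ (m:ℝ) * δ :=
        mul_le_mul_of_nonneg_right this (le_of_lt hδ)
      nlinarith
  -- the 5-cell overlap bound
  have hCzero : ∀ m n : ℤ, η (A v m ∩ A v' n) ≠ 0 → n ∈ Finset.Icc (m-2) (m+2) := by
    intro m n hne
    by_contra hn
    apply hne
    apply hXzero
    ext x
    simp only [Set.mem_inter_iff, Set.mem_empty_iff_false, iff_false, not_and]
    intro hxm hxC
    obtain ⟨h1, h2⟩ : (m:ℝ) * δ ≤ projDir v x ∧ projDir v x < ((m:ℝ)+1) * δ := hxm.1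
    obtain ⟨h3, h4⟩ : (n:ℝ) * δ ≤ projDir v' x ∧ projDir v' x < ((n:ℝ)+1) * δ := hxm.2
    have hdiff : |projDir v x - projDir v' x| ≤ 2 * δ := by
      have he : projDir v x - projDir v' x = projDir (v - v') x := by
        simp [projDir, inner_sub_left]
      rw [he]
      calc |projDir (v - v') x| ≤ ‖v - v'‖ * ‖x‖ := abs_real_inner_le_norm _ _
        _ ≤ δ * 2 := by
            apply mul_le_mul hd (aux_norm_le x hxC) (norm_nonneg _)
            exact le_of_lt hδ
        _ = 2 * δ := by ring
    rw [abs_le] at hdiff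
    rw [Finset.mem_Icc, not_and_or, not_le, not_le] at hn
    rcases hn with hn | hn
    · -- n < m - 2, i.e. n + 1 ≤ m - 2
      have hc : ((n:ℝ)+1) ≤ (m:ℝ) - 2 := by
        have : n + 1 ≤ m - 2 := by omega
        exact_mod_cast this
      have := mul_le_mul_of_nonneg_right hc (le_of_lt hδ)
      nlinarith
    · -- m + 2 < n
      have hc : ((m:ℝ)+1) ≤ (n:ℝ) - 2 := by
        have : m + 1 ≤ n - 2 := by omega
        exact_mod_cast this
      have := mul_le_mul_of_nonneg_right hc (le_of_lt hδ)
      nlinarith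
  -- real-valued cell masses
  set p : ℤ → ℝ := fun m => (η (A v m)).toReal with hp
  set p' : ℤ → ℝ := fun n => (η (A v' n)).toReal with hp'
  set c : ℤ → ℤ → ℝ := fun m n => (η (A v m ∩ A v' n)).toReal with hc
  have hc_nonneg : ∀ m n, 0 ≤ c m n := fun m n => ENNReal.toReal_nonneg
  have hcz_right : ∀ m n, n ∉ S → η (A v m ∩ A v' n) = 0 := fun m n hn =>
    measure_mono_null Set.inter_subset_right (hSzero v' hv' n hn)
  have hcz_left : ∀ m n, m ∉ S → η (A v m ∩ A v' n) = 0 := fun m n hm =>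
    measure_mono_null Set.inter_subset_left (hSzero v hv m hm)
  have hp_eq : ∀ m, p m = ∑ n ∈ S, c m n := by
    intro m
    have he : A v m = ⋃ n, A v m ∩ A v' n := by
      rw [← Set.inter_iUnion, hAcover v', Set.inter_univ]
    have h1 : η (⋃ n, A v m ∩ A v' n) = ∑' n, η (A v m ∩ A v' n) := by
      refine measure_iUnion ?_ fun n => (hAmeas v m).inter (hAmeas v' n)
      intro i j hij
      exact ((hAdisj v' hij).mono Set.inter_subset_right Set.inter_subset_right)
    have h2 : η (A v m) = ∑ n ∈ S, η (A v m ∩ A v' n) := by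
      conv_lhs => rw [he]
      rw [h1]; exact tsum_eq_sum fun n hn => hcz_right m n hn
    show (η (A v m)).toReal = _
    rw [h2, ENNReal.toReal_sum fun n _ => measure_ne_top η _]
  have hp'_eq : ∀ n, p' n = ∑ m ∈ S, c m n := by
    intro n
    have he : A v' n = ⋃ m, A v m ∩ A v' n := by
      rw [← Set.iUnion_inter, hAcover v, Set.univ_inter]
    have h1 : η (⋃ m, A v m ∩ A v' n) = ∑' m, η (A v m ∩ A v' n) := by
      refine measure_iUnion ?_ fun m => (hAmeas v m).inter (hAmeas v' n)
      intro i j hij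
      exact ((hAdisj v hij).mono Set.inter_subset_left Set.inter_subset_left)
    have h2 : η (A v' n) = ∑ m ∈ S, η (A v m ∩ A v' n) := by
      conv_lhs => rw [he]
      rw [h1]; exact tsum_eq_sum fun m hm => hcz_left m n hm
    show (η (A v' n)).toReal = _
    rw [h2, ENNReal.toReal_sum fun m _ => measure_ne_top η _]
  -- total mass at most one
  have hmass : ∀ w : Plane, ∑ m ∈ S, (η (A w m)).toReal ≤ 1 := by
    intro w
    have h1 : ∑ m ∈ S, η (A w m) = η (⋃ m ∈ S, A w m) := by
      refine (measure_biUnion_finset ?_ fun m _ => hAmeas w m).symm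
      intro i _ j _ hij
      exact hAdisj w hij
    have h2 : η (⋃ m ∈ S, A w m) ≤ 1 := prob_le_one
    calc ∑ m ∈ S, (η (A w m)).toReal
        = (∑ m ∈ S, η (A w m)).toReal :=
          (ENNReal.toReal_sum fun m _ => measure_ne_top η _).symm
      _ ≤ (1 : ℝ≥0∞).toReal := by
          apply ENNReal.toReal_mono (by simp)
          rw [h1]; exact h2
      _ = 1 := by simp
  -- identification of the entropies
  have hent : ∀ w : Plane, (∀ m, m ∉ S → η (A w m) = 0) →
      entropyR (η.map (projDir w)) q
        = (∑ m ∈ S, Real.negMulLog ((η (A w m)).toReal)) / Real.log 2 := by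
    intro w hw
    have hmap : ∀ m : ℤ, (η.map (projDir w)) (dint q m) = η (A w m) := fun m =>
      Measure.map_apply (aux_projDir_measurable w) measurableSet_Ico
    have hterm : ∀ m : ℤ,
        -(((η.map (projDir w)) (dint q m)).toReal
            * Real.logb 2 ((η.map (projDir w)) (dint q m)).toReal)
          = Real.negMulLog ((η (A w m)).toReal) / Real.log 2 := by
      intro m
      rw [hmap m, Real.logb, Real.negMulLog]
      ring
    rw [entropyR, tsum_congr hterm, tsum_eq_sum (s := S) ?_, ← Finset.sum_div]
    intro m hm
    rw [hw m hm]
    simp [Real.negMulLog]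
  -- entropy comparison through the joint partition
  have hHv : ∑ m ∈ S, Real.negMulLog (p m)
      ≤ ∑ m ∈ S, ∑ n ∈ S, Real.negMulLog (c m n) := by
    refine Finset.sum_le_sum fun m _ => ?_
    rw [hp_eq m]
    exact aux_negMulLog_sum_le S (fun n => c m n) fun n _ => hc_nonneg m n
  have hD : ∑ m ∈ S, ∑ n ∈ S, Real.negMulLog (c m n)
      ≤ (∑ n ∈ S, Real.negMulLog (p' n)) + Real.log 5 := by
    rw [Finset.sum_comm]
    have hper : ∀ n ∈ S, ∑ m ∈ S, Real.negMulLog (c m n)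
        ≤ Real.negMulLog (p' n) + p' n * Real.log 5 := by
      intro n _
      have hcard : (((S.filter fun m => c m n ≠ 0)).card : ℝ) ≤ 5 := by
        have hsub : (S.filter fun m => c m n ≠ 0) ⊆ Finset.Icc (n-2) (n+2) := by
          intro m hm
          rw [Finset.mem_filter] at hm
          have hne : η (A v m ∩ A v' n) ≠ 0 := by
            intro h0
            exact hm.2 (by simp [hc, h0])
          have := hCzero m n hne
          rw [Finset.mem_Icc] at this ⊢
          omega
        have h1 := Finset.card_le_card hsub
        have h2 : (Finset.Icc (n-2) (n+2)).card = 5 := by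
          rw [Int.card_Icc]
          omega
        rw [h2] at h1
        exact_mod_cast h1
      have := aux_sum_negMulLog_le S (fun m => c m n) (fun m _ => hc_nonneg m n)
        5 (by norm_num) hcard
      rwa [← hp'_eq n] at this
    calc ∑ n ∈ S, ∑ m ∈ S, Real.negMulLog (c m n)
        ≤ ∑ n ∈ S, (Real.negMulLog (p' n) + p' n * Real.log 5) :=
          Finset.sum_le_sum hper
      _ = (∑ n ∈ S, Real.negMulLog (p' n)) + (∑ n ∈ S, p' n) * Real.log 5 := by
          rw [Finset.sum_add_distrib, Finset.sum_mul]
      _ ≤ (∑ n ∈ S, Real.negMulLog (p' n)) + Real.log 5 := by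
          have h5 : (0:ℝ) ≤ Real.log 5 := Real.log_nonneg (by norm_num)
          have := hmass v'
          nlinarith [mul_le_mul_of_nonneg_right (hmass v') h5]
  -- conclude
  rw [hent v (hSzero v hv), hent v' (hSzero v' hv')]
  have hlog2 : (0:ℝ) < Real.log 2 := Real.log_pos (by norm_num)
  have h58 : Real.log 5 ≤ 3 * Real.log 2 := by
    calc Real.log 5 ≤ Real.log 8 := Real.log_le_log (by norm_num) (by norm_num)
      _ = 3 * Real.log 2 := by
          rw [show (8:ℝ) = 2^3 by norm_num, Real.log_pow]
          push_cast; ring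
  rw [div_le_iff₀ hlog2]
  have hexp : ((∑ m ∈ S, Real.negMulLog ((η (A v' m)).toReal)) / Real.log 2 + 3)
      * Real.log 2 = (∑ m ∈ S, Real.negMulLog ((η (A v' m)).toReal)) + 3 * Real.log 2 := by
    field_simp
  rw [hexp]
  have : ∑ m ∈ S, Real.negMulLog (p m)
      ≤ (∑ n ∈ S, Real.negMulLog (p' n)) + Real.log 5 := le_trans hHv hD
  simp only [hp, hp'] at this
  linarith


/-- **Equation (2.4).** Continuity of projected entropy in the direction: if
`|v - v'| ≤ 2^{-q}` then `|H_q(Π_v η) - H_q(Π_{v'} η)| ≤ K/q`. -/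
theorem continuity_of_projected_entropy :
    ∃ K : ℝ, 0 < K ∧ ∀ q : ℕ,
    ∀ η : MeasureTheory.Measure Plane, MeasureTheory.IsProbabilityMeasure η →
      η (unitCubeHO 2) = 1 →
    ∀ v v' : Plane, ‖v‖ = 1 → ‖v'‖ = 1 → ‖v - v'‖ ≤ (2 : ℝ) ^ (-(q : ℤ)) →
    |nentropyR (η.map (projDir v)) q - nentropyR (η.map (projDir v')) q| ≤ K / q := by
  refine ⟨3, by norm_num, ?_⟩
  intro q η hprob hcube v v' hv hv' hd
  rcases Nat.eq_zero_or_pos q with hq | hq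
  · subst hq
    simp [nentropyR]
  · have h1 := aux_entropy_close q η hprob hcube v v' hv hv' hd
    have h2 := aux_entropy_close q η hprob hcube v' v hv' hv (by rwa [norm_sub_rev])
    have hq' : (0:ℝ) < q := by exact_mod_cast hq
    rw [nentropyR, nentropyR, div_sub_div_same, abs_div, abs_of_pos hq']
    gcongr
    exact abs_sub_le_iff.mpr ⟨by linarith, by linarith⟩
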